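/- Let C be a coalgebra over a field k and R a commutative k-algebra. If μ, ν : C → R are lazy linear maps, then their convolution product μ * ν is lazy; and if μ is lazy and convolution invertible with convolution inverse μ⁻¹, then μ⁻¹ is lazy. Hence the set Reg_ℓ(C,R) of convolution-invertible lazy linear maps is a subgroup of the group Reg(C,R) of convolution-invertible linear maps C → R. -/

import Mathlib

open TensorProduct

section Lazy

variable (k : Type*) [Field k] (C : Type*)
  [AddCommGroup C] [Module k C] [Coalgebra k C]
variable (R : Type*) [CommRing R] [Algebra k R]

/-- The convolution product `f * g = μ_R ∘ (f ⊗ g) ∘ Δ_C`. -/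
noncomputable def conv (f g : C →ₗ[k] R) : C →ₗ[k] R :=
  LinearMap.mul' k R ∘ₗ TensorProduct.map f g ∘ₗ Coalgebra.comul (R := k)

/-- The unit `η_R ∘ ε_C` of the convolution monoid. -/
noncomputable def convUnit : C →ₗ[k] R :=
  Algebra.linearMap k R ∘ₗ Coalgebra.counit (R := k)

/-- `μ : C → R` is lazy: `μ(x₁) ⊗ x₂ = μ(x₂) ⊗ x₁` in `R ⊗ C` for all `x`. -/
def IsLazy (μ : C →ₗ[k] R) : Prop :=
  ∀ x : C,
    TensorProduct.map μ (LinearMap.id : C →ₗ[k] C) (Coalgebra.comul (R := k) x)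
      = TensorProduct.map μ (LinearMap.id : C →ₗ[k] C)
          ((TensorProduct.comm k C C) (Coalgebra.comul (R := k) x))

lemma conv_apply' (f g : C →ₗ[k] R) (x : C) (rep : Coalgebra.Repr k x (C × C)) :
    conv k C R f g x = ∑ i ∈ rep.index, f (rep.left i) * g (rep.right i) := by
  simp only [conv, LinearMap.comp_apply]
  rw [← rep.eq]
  simp [map_sum]

lemma conv_assoc' (f g h : C →ₗ[k] R) :
    conv k C R (conv k C R f g) h = conv k C R f (conv k C R g h) := by
  ext x
  set rep : Coalgebra.Repr k x (C × C) := Coalgebra.Repr.arbitrary k x with hrep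
  set a₁ : ∀ i : C × C, Coalgebra.Repr k (rep.left i) (C × C) :=
    fun i => Coalgebra.Repr.arbitrary k _ with ha₁
  set a₂ : ∀ i : C × C, Coalgebra.Repr k (rep.right i) (C × C) :=
    fun i => Coalgebra.Repr.arbitrary k _ with ha₂
  have key := Coalgebra.sum_map_tmul_tmul_eq (R := k) (f := f) (g := g) (h := h)
    (a := x) (repr := rep) (a₁ := a₁) (a₂ := a₂)
  apply_fun (LinearMap.mul' k R ∘ₗ (LinearMap.mul' k R).lTensor R) at key
  simp only [map_sum, LinearMap.comp_apply, LinearMap.lTensor_tmul,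
    LinearMap.mul'_apply] at key
  rw [conv_apply' k C R _ h x rep, conv_apply' k C R f _ x rep]
  calc ∑ i ∈ rep.index, conv k C R f g (rep.left i) * h (rep.right i)
      = ∑ i ∈ rep.index, ∑ j ∈ (a₁ i).index,
          f ((a₁ i).left j) * (g ((a₁ i).right j) * h (rep.right i)) := by
        refine Finset.sum_congr rfl fun i _ => ?_
        rw [conv_apply' k C R f g _ (a₁ i), Finset.sum_mul]
        simp [mul_assoc]
    _ = ∑ i ∈ rep.index, ∑ j ∈ (a₂ i).index,
          f (rep.left i) * (g ((a₂ i).left j) * h ((a₂ i).right j)) := key.symm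
    _ = ∑ i ∈ rep.index, f (rep.left i) * conv k C R g h (rep.right i) := by
        refine Finset.sum_congr rfl fun i _ => ?_
        rw [conv_apply' k C R g h _ (a₂ i), Finset.mul_sum]

lemma conv_unit_left' (f : C →ₗ[k] R) : conv k C R (convUnit k C R) f = f := by
  ext x
  set rep : Coalgebra.Repr k x (C × C) := Coalgebra.Repr.arbitrary k x with hrep
  have key := Coalgebra.sum_counit_tmul_map_eq (R := k) f x (repr := rep)
  apply_fun (TensorProduct.lid k R) at key
  simp only [map_sum, lid_tmul] at key
  rw [conv_apply' k C R _ f x rep]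
  calc ∑ i ∈ rep.index, convUnit k C R (rep.left i) * f (rep.right i)
      = ∑ i ∈ rep.index, Coalgebra.counit (R := k) (rep.left i) • f (rep.right i) := by
        simp [convUnit, Algebra.smul_def]
    _ = f x := by simpa using key

lemma conv_unit_right' (f : C →ₗ[k] R) : conv k C R f (convUnit k C R) = f := by
  ext x
  set rep : Coalgebra.Repr k x (C × C) := Coalgebra.Repr.arbitrary k x with hrep
  have key := Coalgebra.sum_map_tmul_counit_eq (R := k) f x (repr := rep)
  apply_fun (TensorProduct.rid k R) at key
  simp only [map_sum, rid_tmul] at key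
  rw [conv_apply' k C R f _ x rep]
  calc ∑ i ∈ rep.index, f (rep.left i) * convUnit k C R (rep.right i)
      = ∑ i ∈ rep.index, Coalgebra.counit (R := k) (rep.right i) • f (rep.left i) := by
        simp [convUnit, Algebra.smul_def, mul_comm]
    _ = f x := by simpa using key

lemma separating' (t : R ⊗[k] C)
    (h : ∀ φ : C →ₗ[k] R,
      LinearMap.mul' k R (TensorProduct.map LinearMap.id φ t) = 0) :
    t = 0 := by
  classical
  set b := Module.Basis.ofVectorSpace k C with hb
  set E : R ⊗[k] C ≃ₗ[k] (Module.Basis.ofVectorSpaceIndex k C →₀ R) :=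
    (TensorProduct.congr (LinearEquiv.refl k R) b.repr).trans
      (TensorProduct.finsuppScalarRight k k R _) with hE
  have hcoord : ∀ (i : Module.Basis.ofVectorSpaceIndex k C),
      E t i = LinearMap.mul' k R
        (TensorProduct.map LinearMap.id (Algebra.linearMap k R ∘ₗ b.coord i) t) := by
    intro i
    clear h
    induction t using TensorProduct.induction_on with
    | zero => simp
    | tmul r c =>
        simp [hE, TensorProduct.finsuppScalarRight_apply_tmul_apply,
          Module.Basis.coord_apply, Algebra.smul_def, mul_comm]
    | add u v hu hv => simp [map_add, hu, hv]
  have hzero : E t = 0 := by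
    ext i
    rw [hcoord i]
    simpa using h (Algebra.linearMap k R ∘ₗ b.coord i)
  simpa using congrArg E.symm hzero

lemma isLazy_iff_central' (μ : C →ₗ[k] R) :
    IsLazy k C R μ ↔ ∀ φ : C →ₗ[k] R, conv k C R μ φ = conv k C R φ μ := by
  constructor
  · intro h φ
    ext x
    have hx := h x
    set rep : Coalgebra.Repr k x (C × C) := Coalgebra.Repr.arbitrary k x with hrep
    rw [← rep.eq] at hx
    apply_fun (LinearMap.mul' k R ∘ₗ TensorProduct.map LinearMap.id φ) at hx
    simp only [map_sum, LinearMap.comp_apply, TensorProduct.map_tmul,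
      TensorProduct.comm_tmul, LinearMap.mul'_apply, LinearMap.id_coe, id_eq] at hx
    rw [conv_apply' k C R μ φ x rep, conv_apply' k C R φ μ x rep]
    rw [hx]
    exact Finset.sum_congr rfl fun i _ => mul_comm _ _
  · intro h x
    rw [← sub_eq_zero]
    apply separating' k C R
    intro φ
    set rep : Coalgebra.Repr k x (C × C) := Coalgebra.Repr.arbitrary k x with hrep
    have e1 : LinearMap.mul' k R (TensorProduct.map LinearMap.id φ
        (TensorProduct.map μ LinearMap.id (Coalgebra.comul (R := k) x)))
        = conv k C R μ φ x := by
      rw [← rep.eq, conv_apply' k C R μ φ x rep]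
      simp [map_sum]
    have e2 : LinearMap.mul' k R (TensorProduct.map LinearMap.id φ
        (TensorProduct.map μ LinearMap.id
          ((TensorProduct.comm k C C) (Coalgebra.comul (R := k) x))))
        = conv k C R φ μ x := by
      rw [← rep.eq, conv_apply' k C R φ μ x rep]
      simp [map_sum, mul_comm]
    rw [map_sub, map_sub, e1, e2, h φ, sub_self]

/-- the convolution product of two lazy maps is lazy, and the
convolution inverse of a lazy map is lazy; hence the set `Reg_ℓ(C,R)` of
convolution-invertible lazy maps is a subgroup of `Reg(C,R)`. -/
theorem lazy_closed_under_conv_and_inverse :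
    (∀ μ ν : C →ₗ[k] R, IsLazy k C R μ → IsLazy k C R ν →
      IsLazy k C R (conv k C R μ ν)) ∧
    (∀ μ μ' : C →ₗ[k] R, IsLazy k C R μ →
      conv k C R μ μ' = convUnit k C R →
      conv k C R μ' μ = convUnit k C R →
      IsLazy k C R μ') := by
  constructor
  · intro μ ν hμ hν
    rw [isLazy_iff_central'] at hμ hν ⊢
    intro φ
    rw [conv_assoc', hν φ, ← conv_assoc', hμ φ, conv_assoc']
  · intro μ μ' hμ h1 h2
    rw [isLazy_iff_central'] at hμ ⊢
    intro φ
    calc conv k C R μ' φ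
        = conv k C R μ' (conv k C R φ (conv k C R μ μ')) := by
          rw [h1, conv_unit_right']
      _ = conv k C R μ' (conv k C R (conv k C R μ φ) μ') := by
          rw [← conv_assoc' k C R φ μ μ', ← hμ φ]
      _ = conv k C R (conv k C R (conv k C R μ' μ) φ) μ' := by
          rw [← conv_assoc', ← conv_assoc']
      _ = conv k C R φ μ' := by rw [h2, conv_unit_left']

end Lazy
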